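/- Let X, Y and G be random variables on a common probability space taking values in finite sets, and assume G is independent of the pair (X, Y). Let Z_T = E_T(X) and Z_G = E_G(X) for arbitrary functions E_T and E_G, and let Z = f(Z_T, Z_G, G) for an arbitrary function f. Then I(Z; Y) ≤ I(Z_T; Y) + I(Z_G; Y | Z_T). (Theorem 1, split bound, inequality (10).) -/

import Mathlib

open scoped BigOperators

section InfoTheory

variable {Ω : Type*} [Fintype Ω]

open Classical in
/-- The probability mass function of the random variable `f` under the weight `w`
(a probability measure on the finite sample space `Ω`). -/
noncomputable def pmfOf {α : Type*} [Fintype α] (w : Ω → ℝ) (f : Ω → α) (a : α) : ℝ :=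
  ∑ ω, if f ω = a then w ω else 0

/-- Shannon entropy of a finite-valued random variable (with the convention `0 log 0 = 0`,
which holds automatically since `Real.log 0 = 0`). -/
noncomputable def entropy {α : Type*} [Fintype α] (w : Ω → ℝ) (f : Ω → α) : ℝ :=
  -∑ a, pmfOf w f a * Real.log (pmfOf w f a)

/-- Mutual information `I(f; g) = H(f) + H(g) - H(f, g)`. -/
noncomputable def mutualInfo {α β : Type*} [Fintype α] [Fintype β]
    (w : Ω → ℝ) (f : Ω → α) (g : Ω → β) : ℝ :=
  entropy w f + entropy w g - entropy w (fun ω => (f ω, g ω))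

/-- Conditional mutual information
`I(f; g | h) = H(f, h) + H(g, h) - H(f, g, h) - H(h)`. -/
noncomputable def condMutualInfo {α β γ : Type*} [Fintype α] [Fintype β] [Fintype γ]
    (w : Ω → ℝ) (f : Ω → α) (g : Ω → β) (h : Ω → γ) : ℝ :=
  entropy w (fun ω => (f ω, h ω)) + entropy w (fun ω => (g ω, h ω))
    - entropy w (fun ω => (f ω, g ω, h ω)) - entropy w h

/-- Independence of two finite-valued random variables: the joint law is
the product of the marginal laws. -/
def IndepRV {α β : Type*} [Fintype α] [Fintype β]
    (w : Ω → ℝ) (f : Ω → α) (g : Ω → β) : Prop :=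
  ∀ a b, pmfOf w (fun ω => (f ω, g ω)) (a, b) = pmfOf w f a * pmfOf w g b

end InfoTheory

section AuxProof
variable {Ω : Type*} [Fintype Ω]
open Classical

lemma pmfOf_nonneg {α : Type*} [Fintype α] {w : Ω → ℝ} (hw0 : ∀ ω, 0 ≤ w ω)
    (f : Ω → α) (a : α) : 0 ≤ pmfOf w f a := by
  unfold pmfOf
  exact Finset.sum_nonneg fun ω _ => by split <;> simp [hw0 ω]

lemma pmfOf_sum {α : Type*} [Fintype α] (w : Ω → ℝ) (f : Ω → α) :
    ∑ a, pmfOf w f a = ∑ ω, w ω := by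
  unfold pmfOf
  rw [Finset.sum_comm]
  refine Finset.sum_congr rfl fun ω _ => ?_
  simp

lemma pmfOf_comp {α β : Type*} [Fintype α] [Fintype β] (w : Ω → ℝ)
    (φ : α → β) (h : Ω → α) (b : β) :
    pmfOf w (fun ω => φ (h ω)) b = ∑ a, if φ a = b then pmfOf w h a else 0 := by
  unfold pmfOf
  rw [show (∑ a : α, if φ a = b then ∑ ω : Ω, if h ω = a then w ω else 0 else 0)
      = ∑ a : α, ∑ ω : Ω, if φ a = b then (if h ω = a then w ω else 0) else 0 by
    refine Finset.sum_congr rfl fun a _ => ?_; split <;> simp]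
  rw [Finset.sum_comm]
  refine Finset.sum_congr rfl fun ω _ => ?_
  have : ∀ a : α, (if φ a = b then (if h ω = a then w ω else 0) else 0)
      = if h ω = a then (if φ a = b then w ω else 0) else 0 := by
    intro a; by_cases h1 : φ a = b <;> by_cases h2 : h ω = a <;> simp [h1, h2]
  simp only [this]
  rw [Finset.sum_ite_eq Finset.univ (h ω) (fun a => if φ a = b then w ω else 0)]
  simp



lemma pmfOf_comp_inj_apply {α β : Type*} [Fintype α] [Fintype β] (w : Ω → ℝ)
    {φ : α → β} (hφ : Function.Injective φ) (h : Ω → α) (a : α) :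
    pmfOf w (fun ω => φ (h ω)) (φ a) = pmfOf w h a := by
  rw [pmfOf_comp]
  rw [Finset.sum_eq_single a]
  · simp
  · intro a' _ ha'; simp only [ite_eq_right_iff]; intro he; exact absurd (hφ he) ha'
  · simp

lemma entropy_comp_inj {α β : Type*} [Fintype α] [Fintype β] (w : Ω → ℝ)
    {φ : α → β} (hφ : Function.Injective φ) (h : Ω → α) :
    entropy w (fun ω => φ (h ω)) = entropy w h := by
  unfold entropy
  congr 1
  set F : β → ℝ := fun b => pmfOf w (fun ω => φ (h ω)) b *
      Real.log (pmfOf w (fun ω => φ (h ω)) b) with hF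
  have hzero : ∀ b ∈ Finset.univ, b ∉ Finset.univ.image φ → F b = 0 := by
    intro b _ hb
    have : pmfOf w (fun ω => φ (h ω)) b = 0 := by
      rw [pmfOf_comp]
      refine Finset.sum_eq_zero fun a _ => ?_
      have hne : φ a ≠ b := fun he => hb (he ▸ Finset.mem_image_of_mem φ (Finset.mem_univ a))
      simp [hne]
    simp [hF, this]
  calc ∑ b : β, F b = ∑ b ∈ Finset.univ.image φ, F b :=
        (Finset.sum_subset (Finset.subset_univ _) hzero).symm
    _ = ∑ a : α, F (φ a) := Finset.sum_image (fun a _ a' _ hh => hφ hh)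
    _ = ∑ a : α, pmfOf w h a * Real.log (pmfOf w h a) := by
        refine Finset.sum_congr rfl fun a _ => ?_
        rw [hF]; simp only [pmfOf_comp_inj_apply w hφ h a]

lemma log_sum_core {A B C : Type*} [Fintype A] [Fintype B] [Fintype C]
    (p : A × B × C → ℝ) (h0 : ∀ x, 0 ≤ p x) (h1 : ∑ x, p x = 1) :
    0 ≤ ∑ x : A × B × C, p x * (Real.log (p x)
        + Real.log (∑ a, ∑ b, p (a, b, x.2.2))
        - Real.log (∑ b, p (x.1, b, x.2.2))
        - Real.log (∑ a, p (a, x.2.1, x.2.2))) := by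
  classical
  set qAC : A → C → ℝ := fun a c => ∑ b, p (a, b, c) with hqAC
  set qBC : B → C → ℝ := fun b c => ∑ a, p (a, b, c) with hqBC
  set qC : C → ℝ := fun c => ∑ a, ∑ b, p (a, b, c) with hqC
  have hqAC0 : ∀ a c, 0 ≤ qAC a c := fun a c =>
    Finset.sum_nonneg fun b _ => h0 _
  have hqBC0 : ∀ b c, 0 ≤ qBC b c := fun b c =>
    Finset.sum_nonneg fun a _ => h0 _
  have hqC0 : ∀ c, 0 ≤ qC c := fun c =>
    Finset.sum_nonneg fun a _ => hqAC0 a c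
  have hle_AC : ∀ a b c, p (a, b, c) ≤ qAC a c := fun a b c =>
    Finset.single_le_sum (fun b' _ => h0 (a, b', c)) (Finset.mem_univ b)
  have hle_BC : ∀ a b c, p (a, b, c) ≤ qBC b c := fun a b c =>
    Finset.single_le_sum (fun a' _ => h0 (a', b, c)) (Finset.mem_univ a)
  have hAC_le_C : ∀ a c, qAC a c ≤ qC c := fun a c =>
    Finset.single_le_sum (fun a' _ => hqAC0 a' c) (Finset.mem_univ a)
  set s : A × B × C → ℝ := fun x => qAC x.1 x.2.2 * qBC x.2.1 x.2.2 / qC x.2.2 with hs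
  have key : ∀ x : A × B × C, p x - s x ≤ p x * (Real.log (p x)
        + Real.log (qC x.2.2) - Real.log (qAC x.1 x.2.2) - Real.log (qBC x.2.1 x.2.2)) := by
    rintro ⟨a, b, c⟩
    by_cases hp : p (a, b, c) = 0
    · simp only [hs, hp, zero_mul, zero_sub, neg_nonpos, neg_le]
      have : 0 ≤ qAC a c * qBC b c / qC c :=
        div_nonneg (mul_nonneg (hqAC0 a c) (hqBC0 b c)) (hqC0 c)
      linarith
    · have hp' : 0 < p (a, b, c) := lt_of_le_of_ne (h0 _) (Ne.symm hp)
      have hA : 0 < qAC a c := lt_of_lt_of_le hp' (hle_AC a b c)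
      have hB : 0 < qBC b c := lt_of_lt_of_le hp' (hle_BC a b c)
      have hC : 0 < qC c := lt_of_lt_of_le hA (hAC_le_C a c)
      have hsx : 0 < qAC a c * qBC b c / qC c := div_pos (mul_pos hA hB) hC
      have hratio : 0 < qAC a c * qBC b c / qC c / p (a, b, c) := div_pos hsx hp'
      have hlog := Real.log_le_sub_one_of_pos hratio
      have hexp : Real.log (qAC a c * qBC b c / qC c / p (a, b, c))
          = Real.log (qAC a c) + Real.log (qBC b c) - Real.log (qC c) - Real.log (p (a, b, c)) := by
        rw [Real.log_div (by positivity) hp, Real.log_div (by positivity) (ne_of_gt hC),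
          Real.log_mul (ne_of_gt hA) (ne_of_gt hB)]
      rw [hexp] at hlog
      have hmul := mul_le_mul_of_nonneg_left hlog (le_of_lt hp')
      have hcalc : p (a, b, c) * (qAC a c * qBC b c / qC c / p (a, b, c) - 1)
          = qAC a c * qBC b c / qC c - p (a, b, c) := by
        field_simp
      rw [hcalc] at hmul
      show p (a, b, c) - qAC a c * qBC b c / qC c ≤ _
      have hre : p (a, b, c) * (Real.log (p (a, b, c)) + Real.log (qC c)
            - Real.log (qAC a c) - Real.log (qBC b c))
          = -(p (a, b, c) * (Real.log (qAC a c) + Real.log (qBC b c)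
            - Real.log (qC c) - Real.log (p (a, b, c)))) := by ring
      rw [hre]
      linarith
  have swap3 : ∀ g : A → B → C → ℝ, ∑ x : A × B × C, g x.1 x.2.1 x.2.2
      = ∑ c, ∑ a, ∑ b, g a b c := by
    intro g
    rw [Fintype.sum_prod_type]
    calc ∑ a, ∑ y : B × C, g a y.1 y.2 = ∑ a, ∑ b, ∑ c, g a b c := by
          refine Finset.sum_congr rfl fun a _ => ?_; rw [Fintype.sum_prod_type]
      _ = ∑ a, ∑ c, ∑ b, g a b c :=
          Finset.sum_congr rfl fun a _ => Finset.sum_comm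
      _ = ∑ c, ∑ a, ∑ b, g a b c := Finset.sum_comm
  have hqC_eq : ∀ c, ∑ a, qAC a c = qC c := fun c => rfl
  have hqC_eq' : ∀ c, ∑ b, qBC b c = qC c := fun c => Finset.sum_comm
  have sum_s : ∑ x : A × B × C, s x ≤ 1 := by
    have e1 : ∑ x : A × B × C, s x = ∑ c, ∑ a, ∑ b, qAC a c * qBC b c / qC c :=
      swap3 (fun a b c => qAC a c * qBC b c / qC c)
    have e2 : ∀ c, ∑ a, ∑ b, qAC a c * qBC b c / qC c = qC c * qC c / qC c := by
      intro c
      calc ∑ a, ∑ b, qAC a c * qBC b c / qC c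
          = ∑ a, qAC a c * ((∑ b, qBC b c) / qC c) := by
            refine Finset.sum_congr rfl fun a _ => ?_
            rw [← Finset.sum_div, ← Finset.mul_sum, mul_div_assoc]
        _ = (∑ a, qAC a c) * ((∑ b, qBC b c) / qC c) := by rw [← Finset.sum_mul]
        _ = qC c * qC c / qC c := by rw [hqC_eq, hqC_eq', mul_div_assoc]
    have e3 : ∀ c, qC c * qC c / qC c ≤ qC c := by
      intro c
      by_cases hc : qC c = 0
      · simp [hc]
      · rw [mul_div_assoc, div_self hc, mul_one]
    have e4 : ∑ c, qC c = 1 := by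
      rw [← h1, swap3 (fun a b c => p (a, b, c))]
    calc ∑ x : A × B × C, s x = ∑ c, ∑ a, ∑ b, qAC a c * qBC b c / qC c := e1
      _ ≤ ∑ c, qC c := Finset.sum_le_sum fun c _ => (e2 c) ▸ e3 c
      _ = 1 := e4
  have hfin := Finset.sum_le_sum (fun x (_ : x ∈ Finset.univ) => key x)
  rw [Finset.sum_sub_distrib, h1] at hfin
  linarith


lemma marg1 {α β γ : Type*} [Fintype α] [Fintype β] [Fintype γ] (w : Ω → ℝ)
    (f : Ω → α) (g : Ω → β) (h : Ω → γ) (a : α) (c : γ) :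
    pmfOf w (fun ω => (f ω, h ω)) (a, c)
      = ∑ b, pmfOf w (fun ω => (f ω, g ω, h ω)) (a, b, c) := by
  have h1 := pmfOf_comp w (fun x : α × β × γ => (x.1, x.2.2)) (fun ω => (f ω, g ω, h ω)) (a, c)
  dsimp only at h1
  rw [h1]
  simp [Fintype.sum_prod_type, Prod.ext_iff, ite_and, Finset.sum_ite_eq']

lemma marg2 {α β γ : Type*} [Fintype α] [Fintype β] [Fintype γ] (w : Ω → ℝ)
    (f : Ω → α) (g : Ω → β) (h : Ω → γ) (b : β) (c : γ) :
    pmfOf w (fun ω => (g ω, h ω)) (b, c)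
      = ∑ a, pmfOf w (fun ω => (f ω, g ω, h ω)) (a, b, c) := by
  have h1 := pmfOf_comp w (fun x : α × β × γ => (x.2.1, x.2.2)) (fun ω => (f ω, g ω, h ω)) (b, c)
  dsimp only at h1
  rw [h1]
  simp [Fintype.sum_prod_type, Prod.ext_iff, ite_and, Finset.sum_ite_eq']

lemma marg3 {α β γ : Type*} [Fintype α] [Fintype β] [Fintype γ] (w : Ω → ℝ)
    (f : Ω → α) (g : Ω → β) (h : Ω → γ) (c : γ) :
    pmfOf w h c = ∑ a, ∑ b, pmfOf w (fun ω => (f ω, g ω, h ω)) (a, b, c) := by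
  have h1 := pmfOf_comp w (fun x : α × β × γ => x.2.2) (fun ω => (f ω, g ω, h ω)) c
  dsimp only at h1
  rw [h1]
  simp [Fintype.sum_prod_type, Finset.sum_ite_eq']



set_option maxHeartbeats 1000000 in
lemma condMutualInfo_nonneg {α β γ : Type*} [Fintype α] [Fintype β] [Fintype γ]
    (w : Ω → ℝ) (hw0 : ∀ ω, 0 ≤ w ω) (hw1 : ∑ ω, w ω = 1)
    (f : Ω → α) (g : Ω → β) (h : Ω → γ) :
    0 ≤ condMutualInfo w f g h := by
  have hp0 : ∀ x, 0 ≤ pmfOf w (fun ω => (f ω, g ω, h ω)) x :=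
    fun x => pmfOf_nonneg hw0 _ x
  have hp1 : ∑ x, pmfOf w (fun ω => (f ω, g ω, h ω)) x = 1 := by
    rw [pmfOf_sum, hw1]
  have core := log_sum_core (pmfOf w (fun ω => (f ω, g ω, h ω))) hp0 hp1
  set p : α × β × γ → ℝ := pmfOf w (fun ω => (f ω, g ω, h ω)) with hp
  have Hfh : ∑ y : α × γ, pmfOf w (fun ω => (f ω, h ω)) y
        * Real.log (pmfOf w (fun ω => (f ω, h ω)) y)
      = ∑ x : α × β × γ, p x * Real.log (∑ b, p (x.1, b, x.2.2)) := by
    calc ∑ y : α × γ, pmfOf w (fun ω => (f ω, h ω)) y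
          * Real.log (pmfOf w (fun ω => (f ω, h ω)) y)
        = ∑ a, ∑ c, pmfOf w (fun ω => (f ω, h ω)) (a, c)
            * Real.log (pmfOf w (fun ω => (f ω, h ω)) (a, c)) := Fintype.sum_prod_type _
      _ = ∑ a, ∑ c, (∑ b, p (a, b, c)) * Real.log (∑ b, p (a, b, c)) := by
          refine Finset.sum_congr rfl fun a _ => Finset.sum_congr rfl fun c _ => ?_
          rw [marg1 w f g h a c]
      _ = ∑ a, ∑ c, ∑ b, p (a, b, c) * Real.log (∑ b', p (a, b', c)) := by
          refine Finset.sum_congr rfl fun a _ => Finset.sum_congr rfl fun c _ => ?_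
          rw [Finset.sum_mul]
      _ = ∑ a, ∑ b, ∑ c, p (a, b, c) * Real.log (∑ b', p (a, b', c)) :=
          Finset.sum_congr rfl fun a _ => Finset.sum_comm
      _ = ∑ x : α × β × γ, p x * Real.log (∑ b, p (x.1, b, x.2.2)) := by
          rw [Fintype.sum_prod_type (f := fun x : α × β × γ =>
            p x * Real.log (∑ b, p (x.1, b, x.2.2)))]
          refine Finset.sum_congr rfl fun a _ => ?_
          rw [Fintype.sum_prod_type]
  have Hgh : ∑ y : β × γ, pmfOf w (fun ω => (g ω, h ω)) y
        * Real.log (pmfOf w (fun ω => (g ω, h ω)) y)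
      = ∑ x : α × β × γ, p x * Real.log (∑ a, p (a, x.2.1, x.2.2)) := by
    calc ∑ y : β × γ, pmfOf w (fun ω => (g ω, h ω)) y
          * Real.log (pmfOf w (fun ω => (g ω, h ω)) y)
        = ∑ b, ∑ c, pmfOf w (fun ω => (g ω, h ω)) (b, c)
            * Real.log (pmfOf w (fun ω => (g ω, h ω)) (b, c)) := Fintype.sum_prod_type _
      _ = ∑ b, ∑ c, (∑ a, p (a, b, c)) * Real.log (∑ a, p (a, b, c)) := by
          refine Finset.sum_congr rfl fun b _ => Finset.sum_congr rfl fun c _ => ?_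
          rw [marg2 w f g h b c]
      _ = ∑ b, ∑ c, ∑ a, p (a, b, c) * Real.log (∑ a', p (a', b, c)) := by
          refine Finset.sum_congr rfl fun b _ => Finset.sum_congr rfl fun c _ => ?_
          rw [Finset.sum_mul]
      _ = ∑ b, ∑ a, ∑ c, p (a, b, c) * Real.log (∑ a', p (a', b, c)) :=
          Finset.sum_congr rfl fun b _ => Finset.sum_comm
      _ = ∑ a, ∑ b, ∑ c, p (a, b, c) * Real.log (∑ a', p (a', b, c)) := Finset.sum_comm
      _ = ∑ x : α × β × γ, p x * Real.log (∑ a, p (a, x.2.1, x.2.2)) := by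
          rw [Fintype.sum_prod_type (f := fun x : α × β × γ =>
            p x * Real.log (∑ a, p (a, x.2.1, x.2.2)))]
          refine Finset.sum_congr rfl fun a _ => ?_
          rw [Fintype.sum_prod_type]
  have Hh : ∑ c, pmfOf w h c * Real.log (pmfOf w h c)
      = ∑ x : α × β × γ, p x * Real.log (∑ a, ∑ b, p (a, b, x.2.2)) := by
    calc ∑ c, pmfOf w h c * Real.log (pmfOf w h c)
        = ∑ c, (∑ a, ∑ b, p (a, b, c)) * Real.log (∑ a, ∑ b, p (a, b, c)) := by
          refine Finset.sum_congr rfl fun c _ => ?_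
          rw [marg3 w f g h c]
      _ = ∑ c, ∑ a, ∑ b, p (a, b, c) * Real.log (∑ a', ∑ b', p (a', b', c)) := by
          refine Finset.sum_congr rfl fun c _ => ?_
          rw [Finset.sum_mul]
          exact Finset.sum_congr rfl fun a _ => Finset.sum_mul _ _ _
      _ = ∑ a, ∑ c, ∑ b, p (a, b, c) * Real.log (∑ a', ∑ b', p (a', b', c)) :=
          Finset.sum_comm
      _ = ∑ a, ∑ b, ∑ c, p (a, b, c) * Real.log (∑ a', ∑ b', p (a', b', c)) :=
          Finset.sum_congr rfl fun a _ => Finset.sum_comm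
      _ = ∑ x : α × β × γ, p x * Real.log (∑ a, ∑ b, p (a, b, x.2.2)) := by
          rw [Fintype.sum_prod_type (f := fun x : α × β × γ =>
            p x * Real.log (∑ a, ∑ b, p (a, b, x.2.2)))]
          refine Finset.sum_congr rfl fun a _ => ?_
          rw [Fintype.sum_prod_type]
  have expand : ∑ x : α × β × γ, p x * (Real.log (p x)
        + Real.log (∑ a, ∑ b, p (a, b, x.2.2))
        - Real.log (∑ b, p (x.1, b, x.2.2))
        - Real.log (∑ a, p (a, x.2.1, x.2.2)))
      = (∑ x, p x * Real.log (p x)) + (∑ x, p x * Real.log (∑ a, ∑ b, p (a, b, x.2.2)))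
        - (∑ x, p x * Real.log (∑ b, p (x.1, b, x.2.2)))
        - (∑ x, p x * Real.log (∑ a, p (a, x.2.1, x.2.2))) := by
    rw [← Finset.sum_add_distrib, ← Finset.sum_sub_distrib, ← Finset.sum_sub_distrib]
    exact Finset.sum_congr rfl fun x _ => by ring
  unfold condMutualInfo entropy
  rw [Hfh, Hgh, Hh, ← hp]
  rw [expand] at core
  linarith


lemma mutualInfo_comp_le {α β V : Type*} [Fintype α] [Fintype β] [Fintype V]
    (w : Ω → ℝ) (hw0 : ∀ ω, 0 ≤ w ω) (hw1 : ∑ ω, w ω = 1)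
    (W : Ω → α) (Y : Ω → β) (φ : α → V) :
    mutualInfo w (fun ω => φ (W ω)) Y ≤ mutualInfo w W Y := by
  have hcmi := condMutualInfo_nonneg w hw0 hw1 W Y (fun ω => φ (W ω))
  have e1 : entropy w (fun ω => (W ω, φ (W ω))) = entropy w W := by
    have e := entropy_comp_inj w (φ := fun a : α => (a, φ a))
      (fun x y hxy => congrArg Prod.fst hxy) W
    exact e
  have e2 : entropy w (fun ω => (Y ω, φ (W ω))) = entropy w (fun ω => (φ (W ω), Y ω)) := by
    have e := entropy_comp_inj w (φ := fun y : V × β => (y.2, y.1))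
      (fun x y hxy => by simp only [Prod.mk.injEq] at hxy; exact Prod.ext hxy.2 hxy.1)
      (fun ω => (φ (W ω), Y ω))
    dsimp only at e; exact e
  have e3 : entropy w (fun ω => (W ω, Y ω, φ (W ω))) = entropy w (fun ω => (W ω, Y ω)) := by
    have e := entropy_comp_inj w (φ := fun y : α × β => (y.1, y.2, φ y.1))
      (fun x y hxy => by
        simp only [Prod.mk.injEq] at hxy; exact Prod.ext hxy.1 hxy.2.1)
      (fun ω => (W ω, Y ω))
    dsimp only at e; exact e
  unfold condMutualInfo at hcmi
  unfold mutualInfo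
  rw [e1, e2, e3] at hcmi
  linarith

lemma indepRV_comp_right {α β γ : Type*} [Fintype α] [Fintype β] [Fintype γ]
    (w : Ω → ℝ) {f : Ω → α} {g : Ω → β} (hind : IndepRV w f g) (ψ : β → γ) :
    IndepRV w f (fun ω => ψ (g ω)) := by
  intro a c
  have hind' : ∀ a b, pmfOf w (fun ω => (f ω, g ω)) (a, b)
      = pmfOf w f a * pmfOf w g b := hind
  have h1 := pmfOf_comp w (fun y : α × β => (y.1, ψ y.2)) (fun ω => (f ω, g ω)) (a, c)
  dsimp only at h1
  rw [h1, pmfOf_comp w ψ g c, Fintype.sum_prod_type]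
  simp only [hind', Prod.mk.injEq, ite_and, Finset.mul_sum]
  rw [Finset.sum_comm]
  refine Finset.sum_congr rfl fun b _ => ?_
  rw [Finset.sum_ite_eq' Finset.univ a
    (fun x => if ψ b = c then pmfOf w f x * pmfOf w g b else 0)]
  by_cases hb : ψ b = c <;> simp [hb]

lemma entropy_pair_of_indep {α β : Type*} [Fintype α] [Fintype β]
    (w : Ω → ℝ) (hw1 : ∑ ω, w ω = 1) {f : Ω → α} {g : Ω → β} (hind : IndepRV w f g) :
    entropy w (fun ω => (f ω, g ω)) = entropy w f + entropy w g := by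
  unfold entropy
  have hs_f : ∑ a, pmfOf w f a = 1 := by rw [pmfOf_sum, hw1]
  have hs_g : ∑ b, pmfOf w g b = 1 := by rw [pmfOf_sum, hw1]
  have key : ∀ (a : α) (b : β), pmfOf w f a * pmfOf w g b
        * Real.log (pmfOf w f a * pmfOf w g b)
      = pmfOf w f a * Real.log (pmfOf w f a) * pmfOf w g b
        + pmfOf w f a * (pmfOf w g b * Real.log (pmfOf w g b)) := by
    intro a b
    by_cases ha : pmfOf w f a = 0
    · simp [ha]
    by_cases hb : pmfOf w g b = 0
    · simp [hb]
    rw [Real.log_mul ha hb]; ring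
  have main : ∑ y : α × β, pmfOf w (fun ω => (f ω, g ω)) y
        * Real.log (pmfOf w (fun ω => (f ω, g ω)) y)
      = (∑ a, pmfOf w f a * Real.log (pmfOf w f a))
        + (∑ b, pmfOf w g b * Real.log (pmfOf w g b)) := by
    rw [Fintype.sum_prod_type]
    calc ∑ a, ∑ b, pmfOf w (fun ω => (f ω, g ω)) (a, b)
            * Real.log (pmfOf w (fun ω => (f ω, g ω)) (a, b))
        = ∑ a, ∑ b, (pmfOf w f a * Real.log (pmfOf w f a) * pmfOf w g b
            + pmfOf w f a * (pmfOf w g b * Real.log (pmfOf w g b))) := by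
          refine Finset.sum_congr rfl fun a _ => Finset.sum_congr rfl fun b _ => ?_
          rw [hind a b]; exact key a b
      _ = ∑ a, (pmfOf w f a * Real.log (pmfOf w f a) * (∑ b, pmfOf w g b)
            + pmfOf w f a * (∑ b, pmfOf w g b * Real.log (pmfOf w g b))) := by
          refine Finset.sum_congr rfl fun a _ => ?_
          rw [Finset.sum_add_distrib, ← Finset.mul_sum, ← Finset.mul_sum]
      _ = ∑ a, (pmfOf w f a * Real.log (pmfOf w f a)
            + pmfOf w f a * (∑ b, pmfOf w g b * Real.log (pmfOf w g b))) := by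
          simp [hs_g]
      _ = (∑ a, pmfOf w f a * Real.log (pmfOf w f a))
            + (∑ a, pmfOf w f a) * (∑ b, pmfOf w g b * Real.log (pmfOf w g b)) := by
          rw [Finset.sum_add_distrib, ← Finset.sum_mul]
      _ = _ := by rw [hs_f, one_mul]
  rw [main]; ring

end AuxProof

/-- **Theorem 1 (split bound, inequality (10)).**
If `G` is independent of the pair `(X, Y)`, `Z_T = E_T(X)`, `Z_G = E_G(X)` and
`Z = f(Z_T, Z_G, G)`, then `I(Z; Y) ≤ I(Z_T; Y) + I(Z_G; Y | Z_T)`. -/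
theorem graph_conditioned_split_bound
    {Ω 𝒳 𝒴 𝒢 T U V : Type*} [Fintype Ω] [Fintype 𝒳] [Fintype 𝒴] [Fintype 𝒢]
    [Fintype T] [Fintype U] [Fintype V]
    (w : Ω → ℝ) (hw0 : ∀ ω, 0 ≤ w ω) (hw1 : ∑ ω, w ω = 1)
    (X : Ω → 𝒳) (Y : Ω → 𝒴) (G : Ω → 𝒢)
    (hGindep : IndepRV w G (fun ω => (X ω, Y ω)))
    (E_T : 𝒳 → T) (E_G : 𝒳 → U) (f : T × U × 𝒢 → V) :
    mutualInfo w (fun ω => f (E_T (X ω), E_G (X ω), G ω)) Y ≤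
      mutualInfo w (fun ω => E_T (X ω)) Y +
        condMutualInfo w (fun ω => E_G (X ω)) Y (fun ω => E_T (X ω)) := by
  classical
  have step1 : mutualInfo w (fun ω => f (E_T (X ω), E_G (X ω), G ω)) Y
      ≤ mutualInfo w (fun ω => (E_T (X ω), E_G (X ω), G ω)) Y :=
    mutualInfo_comp_le w hw0 hw1 (fun ω => (E_T (X ω), E_G (X ω), G ω)) Y f
  have hGAB : IndepRV w G (fun ω => (E_T (X ω), E_G (X ω))) := by
    have h := indepRV_comp_right w hGindep (fun p : 𝒳 × 𝒴 => (E_T p.1, E_G p.1))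
    dsimp only at h; exact h
  have hGABY : IndepRV w G (fun ω => ((E_T (X ω), E_G (X ω)), Y ω)) := by
    have h := indepRV_comp_right w hGindep (fun p : 𝒳 × 𝒴 => ((E_T p.1, E_G p.1), p.2))
    dsimp only at h; exact h
  have eW : entropy w (fun ω => (E_T (X ω), E_G (X ω), G ω))
      = entropy w G + entropy w (fun ω => (E_T (X ω), E_G (X ω))) := by
    have e := entropy_comp_inj w (φ := fun x : 𝒢 × (T × U) => (x.2.1, x.2.2, x.1))
      (fun x y hxy => by
        simp only [Prod.mk.injEq] at hxy
        exact Prod.ext hxy.2.2 (Prod.ext hxy.1 hxy.2.1))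
      (fun ω => (G ω, (E_T (X ω), E_G (X ω))))
    dsimp only at e
    rw [e]
    exact entropy_pair_of_indep w hw1 hGAB
  have eWY : entropy w (fun ω => ((E_T (X ω), E_G (X ω), G ω), Y ω))
      = entropy w G + entropy w (fun ω => ((E_T (X ω), E_G (X ω)), Y ω)) := by
    have e := entropy_comp_inj w
      (φ := fun x : 𝒢 × ((T × U) × 𝒴) => ((x.2.1.1, x.2.1.2, x.1), x.2.2))
      (fun x y hxy => by
        simp only [Prod.mk.injEq] at hxy
        obtain ⟨⟨h1, h2, h3⟩, h4⟩ := hxy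
        exact Prod.ext h3 (Prod.ext (Prod.ext h1 h2) h4))
      (fun ω => (G ω, ((E_T (X ω), E_G (X ω)), Y ω)))
    dsimp only at e
    rw [e]
    exact entropy_pair_of_indep w hw1 hGABY
  have step2 : mutualInfo w (fun ω => (E_T (X ω), E_G (X ω), G ω)) Y
      = mutualInfo w (fun ω => (E_T (X ω), E_G (X ω))) Y := by
    simp only [mutualInfo]
    rw [eW, eWY]
    ring
  have e_swapAB : entropy w (fun ω => (E_G (X ω), E_T (X ω)))
      = entropy w (fun ω => (E_T (X ω), E_G (X ω))) := by
    have e := entropy_comp_inj w (φ := fun x : T × U => (x.2, x.1))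
      (fun x y hxy => by
        simp only [Prod.mk.injEq] at hxy; exact Prod.ext hxy.2 hxy.1)
      (fun ω => (E_T (X ω), E_G (X ω)))
    dsimp only at e; exact e
  have e_swapYA : entropy w (fun ω => (Y ω, E_T (X ω)))
      = entropy w (fun ω => (E_T (X ω), Y ω)) := by
    have e := entropy_comp_inj w (φ := fun x : T × 𝒴 => (x.2, x.1))
      (fun x y hxy => by
        simp only [Prod.mk.injEq] at hxy; exact Prod.ext hxy.2 hxy.1)
      (fun ω => (E_T (X ω), Y ω))
    dsimp only at e; exact e
  have e_tri : entropy w (fun ω => (E_G (X ω), Y ω, E_T (X ω)))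
      = entropy w (fun ω => ((E_T (X ω), E_G (X ω)), Y ω)) := by
    have e := entropy_comp_inj w (φ := fun x : (T × U) × 𝒴 => (x.1.2, x.2, x.1.1))
      (fun x y hxy => by
        simp only [Prod.mk.injEq] at hxy
        obtain ⟨h1, h2, h3⟩ := hxy
        exact Prod.ext (Prod.ext h3 h1) h2)
      (fun ω => ((E_T (X ω), E_G (X ω)), Y ω))
    dsimp only at e; exact e
  have step3 : mutualInfo w (fun ω => (E_T (X ω), E_G (X ω))) Y
      = mutualInfo w (fun ω => E_T (X ω)) Y
        + condMutualInfo w (fun ω => E_G (X ω)) Y (fun ω => E_T (X ω)) := by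
    simp only [mutualInfo, condMutualInfo]
    rw [e_swapAB, e_swapYA, e_tri]
    ring
  linarith
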